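/- For every m ≥ 1, the polynomial P_m has exactly m distinct real roots. -/

import Mathlib

noncomputable def P : ℕ → Polynomial ℝ
  | 0 => 1
  | 1 => Polynomial.X
  | (m + 2) => Polynomial.X * P (m + 1) - P m

open Polynomial Real

lemma P_monic_deg : ∀ m : ℕ, (P m).Monic ∧ (P m).natDegree = m := by
  intro m
  induction m using Nat.twoStepInduction with
  | zero => exact ⟨monic_one, natDegree_one⟩
  | one => exact ⟨monic_X, natDegree_X⟩
  | more n ih1 ih2 =>
    obtain ⟨m1, d1⟩ := ih1
    obtain ⟨m2, d2⟩ := ih2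
    have hmul : (Polynomial.X * P (n+1)).Monic := monic_X.mul m2
    have hdmul : (Polynomial.X * P (n+1)).natDegree = n + 2 := by
      rw [(monic_X (R := ℝ)).natDegree_mul m2, natDegree_X, d2]; omega
    have hlt : (P n).natDegree < (Polynomial.X * P (n+1)).natDegree := by
      rw [hdmul, d1]; omega
    have hdeglt : (P n).degree < (Polynomial.X * P (n+1)).degree :=
      degree_lt_degree hlt
    constructor
    · show (Polynomial.X * P (n+1) - P n).Monic
      exact hmul.sub_of_left hdeglt
    · show (Polynomial.X * P (n+1) - P n).natDegree = n + 2
      rw [natDegree_sub_eq_left_of_natDegree_lt hlt, hdmul]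

lemma P_eval_cos : ∀ (m : ℕ) (θ : ℝ),
    (P m).eval (2 * Real.cos θ) * Real.sin θ = Real.sin ((m + 1) * θ) := by
  intro m
  induction m using Nat.twoStepInduction with
  | zero => intro θ; simp [P]
  | one =>
    intro θ; simp [P]
    rw [show ((1:ℝ)+1)*θ = 2*θ by ring, Real.sin_two_mul]; ring
  | more n ih1 ih2 =>
    intro θ
    have h1 := ih1 θ
    have h2 := ih2 θ
    show ((Polynomial.X * P (n+1) - P n).eval (2 * Real.cos θ)) * Real.sin θ = _
    have key : Real.sin ((↑(n+2) + 1) * θ) = Real.sin ((↑n + 1 + 1) * θ + θ) := by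
      push_cast; ring_nf
    rw [key]
    simp only [eval_sub, eval_mul, eval_X]
    rw [Real.sin_add]
    have h3 : Real.sin ((↑n + 1) * θ) = Real.sin ((↑n + 1 + 1) * θ - θ) := by ring_nf
    rw [h3, Real.sin_sub] at h1
    push_cast at h1 h2 ⊢
    linear_combination 2 * Real.cos θ * h2 - h1

theorem stmt_11 (m : ℕ) (hm : 1 ≤ m) :
    {x : ℝ | (P m).eval x = 0}.ncard = m := by
  obtain ⟨hmon, hdeg⟩ := P_monic_deg m
  have hne : P m ≠ 0 := hmon.ne_zero
  have hset : {x : ℝ | (P m).eval x = 0} = ↑((P m).roots.toFinset) := by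
    ext x
    simp [Multiset.mem_toFinset, mem_roots, hne, IsRoot]
  rw [hset, Set.ncard_coe_finset]
  -- upper bound
  have hub : (P m).roots.toFinset.card ≤ m := by
    calc (P m).roots.toFinset.card ≤ Multiset.card (P m).roots := (P m).roots.toFinset_card_le
    _ ≤ (P m).natDegree := (P m).card_roots'
    _ = m := hdeg
  -- lower bound
  set f : ℕ → ℝ := fun k => 2 * Real.cos (k * π / (m + 1)) with hf
  have hroot : ∀ k ∈ Finset.Icc 1 m, f k ∈ (P m).roots.toFinset := by
    intro k hk
    simp only [Finset.mem_Icc] at hk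
    have hk1 : (1:ℝ) ≤ (k:ℝ) := by exact_mod_cast hk.1
    have hθpos : 0 < (k : ℝ) * π / (m + 1) := by
      apply div_pos (by nlinarith [Real.pi_pos]) (by positivity)
    have hθlt : (k : ℝ) * π / (m + 1) < π := by
      rw [div_lt_iff₀ (by positivity)]
      have : (k : ℝ) < m + 1 := by exact_mod_cast Nat.lt_succ_of_le hk.2
      nlinarith [Real.pi_pos]
    have hs : Real.sin ((k : ℝ) * π / (m + 1)) ≠ 0 :=
      ne_of_gt (Real.sin_pos_of_pos_of_lt_pi hθpos hθlt)
    have hev := P_eval_cos m ((k : ℝ) * π / (m + 1))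
    have : ((m : ℝ) + 1) * ((k : ℝ) * π / (m + 1)) = k * π := by
      field_simp
    rw [this] at hev
    have hz : Real.sin ((k : ℝ) * π) = 0 := Real.sin_nat_mul_pi k
    rw [hz] at hev
    have : (P m).eval (f k) = 0 := by
      rcases mul_eq_zero.mp hev with h | h
      · exact h
      · exact absurd h hs
    simp [Multiset.mem_toFinset, mem_roots, hne, IsRoot, this]
  have hinj : Set.InjOn f (Finset.Icc 1 m) := by
    intro a ha b hb hab
    simp only [Finset.coe_Icc, Set.mem_Icc] at ha hb
    have hπ := Real.pi_pos
    have hma : (a : ℝ) * π / (m + 1) ∈ Set.Icc 0 π := by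
      constructor
      · positivity
      · rw [div_le_iff₀ (by positivity)]
        have : (a : ℝ) ≤ m + 1 := by exact_mod_cast Nat.le_succ_of_le ha.2
        nlinarith
    have hmb : (b : ℝ) * π / (m + 1) ∈ Set.Icc 0 π := by
      constructor
      · positivity
      · rw [div_le_iff₀ (by positivity)]
        have : (b : ℝ) ≤ m + 1 := by exact_mod_cast Nat.le_succ_of_le hb.2
        nlinarith
    have := Real.injOn_cos hma hmb (by
      have := mul_left_cancel₀ (two_ne_zero (α := ℝ)) hab
      exact this)
    have h2 : (a : ℝ) = b := by
      field_simp at this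
      exact_mod_cast this
    exact_mod_cast h2
  have hlb : m ≤ (P m).roots.toFinset.card := by
    calc m = (Finset.Icc 1 m).card := by simp
    _ = ((Finset.Icc 1 m).image f).card := (Finset.card_image_of_injOn hinj).symm
    _ ≤ (P m).roots.toFinset.card := Finset.card_le_card (by
        intro x hx
        simp only [Finset.mem_image] at hx
        obtain ⟨k, hk, rfl⟩ := hx
        exact hroot k hk)
  omega
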